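/- Let x* be an asymptotically stable equilibrium of a continuous flow φ on ℝ^d with region of attraction A(x*). Then A(x*) is contractible: the map H : [0,1] × A(x*) → A(x*) defined by H(s,x) = φ(s/(1-s), x) for s < 1 and H(1,x) = x* is continuous and gives a homotopy from the identity to the constant map x*. -/

import Mathlib

open Filter Set

/-- The region of attraction of an asymptotically stable equilibrium is
contractible via the homotopy H(s,x) = φ(s/(1-s), x) for s < 1 and H(1,x) = x*. -/
theorem roa_contractible
    (d : ℕ) (φ : ℝ → EuclideanSpace ℝ (Fin d) → EuclideanSpace ℝ (Fin d))
    (hcont : Continuous fun p : ℝ × EuclideanSpace ℝ (Fin d) => φ p.1 p.2)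
    (hzero : ∀ x, φ 0 x = x)
    (hsemi : ∀ s t x, φ (s + t) x = φ s (φ t x))
    (xstar : EuclideanSpace ℝ (Fin d))
    (heq : ∀ t, φ t xstar = xstar)
    (A : Set (EuclideanSpace ℝ (Fin d)))
    (hA : A = {x | Tendsto (fun t => φ t x) atTop (nhds xstar)})
    (hAopen : IsOpen A)
    (hAinv : ∀ x ∈ A, ∀ t ≥ (0 : ℝ), φ t x ∈ A)
    (hstable : ∀ V ∈ nhds xstar, ∃ W ∈ nhds xstar, ∀ x ∈ W, ∀ t ≥ (0 : ℝ), φ t x ∈ V)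
    (H : ℝ × EuclideanSpace ℝ (Fin d) → EuclideanSpace ℝ (Fin d))
    (hH : ∀ s x, H (s, x) = if s < 1 then φ (s / (1 - s)) x else xstar) :
    ContinuousOn H (Set.Icc (0 : ℝ) 1 ×ˢ A) ∧
      (∀ s ∈ Set.Icc (0 : ℝ) 1, ∀ x ∈ A, H (s, x) ∈ A) ∧
      (∀ x ∈ A, H (0, x) = x) ∧ (∀ x ∈ A, H (1, x) = xstar) := by
  have hxstarA : xstar ∈ A := by
    rw [hA]; simp only [mem_setOf_eq, heq]; exact tendsto_const_nhds
  refine ⟨?_, ?_, ?_, ?_⟩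
  · -- continuity
    rintro ⟨s, x⟩ ⟨hs, hx⟩
    rcases lt_or_ge s 1 with hs1 | hs1
    · -- s < 1 : H agrees with a continuous function on the open set {p | p.1 < 1}
      apply ContinuousAt.continuousWithinAt
      have hg : ContinuousAt (fun p : ℝ × EuclideanSpace ℝ (Fin d) =>
          φ (p.1 / (1 - p.1)) p.2) (s, x) := by
        exact ContinuousAt.comp hcont.continuousAt
          ((continuousAt_fst.div (continuousAt_const.sub continuousAt_fst)
            (by simp; linarith)).prodMk continuousAt_snd)
      have heqv : H =ᶠ[nhds (s, x)]
          (fun p : ℝ × EuclideanSpace ℝ (Fin d) => φ (p.1 / (1 - p.1)) p.2) := by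
        have hopen : IsOpen {p : ℝ × EuclideanSpace ℝ (Fin d) | p.1 < 1} :=
          isOpen_lt continuous_fst continuous_const
        filter_upwards [hopen.mem_nhds (by simpa using hs1)] with p hp
        obtain ⟨a, b⟩ := p
        rw [hH a b, if_pos hp]
      exact hg.congr heqv.symm
    · -- s = 1
      have hseq : s = 1 := le_antisymm hs.2 hs1
      subst hseq
      have hH1 : H (1, x) = xstar := by rw [hH]; simp
      rw [ContinuousWithinAt, hH1]
      intro V hV
      obtain ⟨W, hW, hWV⟩ := hstable V hV
      -- choose T ≥ 0 with φ T x ∈ interior W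
      have hx' : Tendsto (fun t => φ t x) atTop (nhds xstar) := by
        rw [hA] at hx; exact hx
      have hev : ∀ᶠ t in atTop, φ t x ∈ interior W :=
        hx' (interior_mem_nhds.mpr hW)
      obtain ⟨T₀, hT₀⟩ := hev.exists_forall_of_atTop
      set T : ℝ := max T₀ 0 with hTdef
      have hTnn : (0 : ℝ) ≤ T := le_max_right _ _
      have hTx : φ T x ∈ interior W := hT₀ T (le_max_left _ _)
      -- U : open nbhd of x
      set U : Set (EuclideanSpace ℝ (Fin d)) :=
        (fun y => φ T y) ⁻¹' (interior W) with hUdef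
      have hUopen : IsOpen U :=
        isOpen_interior.preimage (hcont.comp (continuous_const.prodMk continuous_id))
      have hxU : x ∈ U := hTx
      -- the neighborhood Ioi (T/(T+1)) ×ˢ U
      have hT1 : T / (T + 1) < 1 := by
        rw [div_lt_one (by linarith)]; linarith
      rw [mem_map, mem_nhdsWithin]
      refine ⟨Ioi (T / (T + 1)) ×ˢ U, isOpen_Ioi.prod hUopen, ⟨hT1, hxU⟩, ?_⟩
      rintro ⟨a, b⟩ ⟨⟨ha, hb⟩, -⟩
      simp only [mem_preimage]
      rw [hH]
      by_cases ha1 : a < 1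
      · rw [if_pos ha1]
        have h1a : (0 : ℝ) < 1 - a := by linarith
        have hge : T ≤ a / (1 - a) := by
          rw [le_div_iff₀ h1a]
          have ha' : T / (T + 1) < a := ha
          rw [div_lt_iff₀ (by linarith : (0:ℝ) < T + 1)] at ha'
          nlinarith
        have := hWV (φ T b) (interior_subset hb) (a / (1 - a) - T) (by linarith)
        rwa [← hsemi, sub_add_cancel] at this
      · rw [if_neg ha1]
        have hxW : xstar ∈ W := mem_of_mem_nhds hW
        have := hWV xstar hxW 0 le_rfl
        rwa [hzero] at this
  · intro s hs x hx
    rw [hH]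
    by_cases h : s < 1
    · rw [if_pos h]
      exact hAinv x hx _ (div_nonneg hs.1 (by linarith))
    · rw [if_neg h]; exact hxstarA
  · intro x hx
    rw [hH]; simp [hzero]
  · intro x hx
    rw [hH]; simp
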